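/- Let Φ = [[Φ₁₁, Φ₁₂], [Φ₁₂ᵀ, Φ₂₂]] ∈ Sym(n+T) with Φ₁₁ ⪰ 0 and Φ₂₂ ≺ 0. Then the set of matrices W ∈ ℝ^{n×T} satisfying [I, W] Φ [I, W]ᵀ ⪰ 0 (where [I, W] denotes the n×(n+T) horizontal concatenation) is a bounded set. -/

import Mathlib

open Matrix


lemma symm_dot (T : ℕ) (A : Matrix (Fin T) (Fin T) ℝ) (hA : Aᵀ = A) (x y : Fin T → ℝ) :
    x ⬝ᵥ (A *ᵥ y) = y ⬝ᵥ (A *ᵥ x) := by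
  rw [dotProduct_mulVec, ← hA, vecMul_transpose, dotProduct_comm, hA]

lemma cs (T : ℕ) (A : Matrix (Fin T) (Fin T) ℝ) (hA : A.PosSemidef) (x y : Fin T → ℝ) :
    (x ⬝ᵥ (A *ᵥ y))^2 ≤ (x ⬝ᵥ (A *ᵥ x)) * (y ⬝ᵥ (A *ᵥ y)) := by
  have hsym : Aᵀ = A := by
    have := hA.1; rwa [IsHermitian, conjTranspose_eq_transpose_of_trivial] at this
  have key : ∀ t : ℝ, 0 ≤ (y ⬝ᵥ (A *ᵥ y)) * (t * t) + (2 * (x ⬝ᵥ (A *ᵥ y))) * t + (x ⬝ᵥ (A *ᵥ x)) := by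
    intro t
    have h0 := (posSemidef_iff_dotProduct_mulVec.mp hA).2 (x + t • y)
    simp only [star_trivial] at h0
    have expand : (x + t • y) ⬝ᵥ (A *ᵥ (x + t • y)) =
        (y ⬝ᵥ (A *ᵥ y)) * (t * t) + (2 * (x ⬝ᵥ (A *ᵥ y))) * t + (x ⬝ᵥ (A *ᵥ x)) := by
      rw [mulVec_add, dotProduct_add, add_dotProduct, add_dotProduct,
        mulVec_smul, dotProduct_smul, smul_dotProduct, smul_dotProduct, dotProduct_smul,
        symm_dot T A hsym y x]
      simp only [smul_eq_mul]; ring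
    rw [expand] at h0; linarith
  have hd := discrim_le_zero key
  rw [discrim] at hd
  nlinarith [hd]

lemma diag_eq (n T : ℕ) (Φ11 : Matrix (Fin n) (Fin n) ℝ) (Φ12 : Matrix (Fin n) (Fin T) ℝ)
    (Φ22 : Matrix (Fin T) (Fin T) ℝ) (W : Matrix (Fin n) (Fin T) ℝ) (i : Fin n) :
    (Φ11 + W * Φ12ᵀ + Φ12 * Wᵀ + W * Φ22 * Wᵀ) i i =
      Φ11 i i + 2 * ((fun j => Φ12 i j) ⬝ᵥ (W i)) + (W i) ⬝ᵥ (Φ22 *ᵥ (W i)) := by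
  have h2 : ∑ j, W i j * Φ12 i j = ∑ j, Φ12 i j * W i j := by
    apply Finset.sum_congr rfl; intros; ring
  have h4 : ∑ k, (∑ j, W i j * Φ22 j k) * W i k = ∑ j, W i j * ∑ k, Φ22 j k * W i k := by
    simp only [Finset.sum_mul, Finset.mul_sum]
    rw [Finset.sum_comm]
    apply Finset.sum_congr rfl; intros; apply Finset.sum_congr rfl; intros; ring
  simp only [Matrix.add_apply, Matrix.mul_apply, transpose_apply, dotProduct, mulVec]
  rw [h2, h4]
  ring

lemma diag_nonneg (m : ℕ) (M : Matrix (Fin m) (Fin m) ℝ) (hM : M.PosSemidef) (i : Fin m) :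
    0 ≤ M i i := by
  have := (posSemidef_iff_dotProduct_mulVec.mp hM).2 (Pi.single i 1)
  simpa [dotProduct, mulVec, Pi.single_apply] using this


/-- If `Φ₁₁ ⪰ 0` and `Φ₂₂ ≺ 0`, then the set of matrices `W` satisfying the
QMI `Φ₁₁ + W Φ₁₂ᵀ + Φ₁₂ Wᵀ + W Φ₂₂ Wᵀ ⪰ 0` is bounded. -/
theorem qmi_set_bounded
    (n T : ℕ) (Φ11 : Matrix (Fin n) (Fin n) ℝ) (Φ12 : Matrix (Fin n) (Fin T) ℝ)
    (Φ22 : Matrix (Fin T) (Fin T) ℝ)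
    (h11 : Φ11.PosSemidef) (h22 : (-Φ22).PosDef) :
    ∃ c : ℝ, ∀ W : Matrix (Fin n) (Fin T) ℝ,
      (Φ11 + W * Φ12ᵀ + Φ12 * Wᵀ + W * Φ22 * Wᵀ).PosSemidef →
      ∀ i j, |W i j| ≤ c := by
  set A := -Φ22 with hAdef
  have hsymA : Aᵀ = A := by
    have := h22.1; rwa [IsHermitian, conjTranspose_eq_transpose_of_trivial] at this
  have hdet : IsUnit A.det := isUnit_iff_ne_zero.mpr h22.det_pos.ne'
  have hinv : A⁻¹.PosDef := h22.inv
  have hAinv : A * A⁻¹ = 1 := mul_nonsing_inv A hdet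
  set b : Fin n → (Fin T → ℝ) := fun i j => Φ12 i j with hbdef
  set w : Fin n → (Fin T → ℝ) := fun i => A⁻¹ *ᵥ b i with hwdef
  set c' : Fin n → ℝ := fun i => Φ11 i i + b i ⬝ᵥ w i with hc'def
  refine ⟨∑ i, ∑ j, (|w i j| + Real.sqrt (A⁻¹ j j * c' i)), fun W hW i j => ?_⟩
  set v : Fin T → ℝ := W i with hvdef
  set u : Fin T → ℝ := v - w i with hudef
  have hAw : A *ᵥ w i = b i := by
    show A *ᵥ (A⁻¹ *ᵥ b i) = b i
    rw [mulVec_mulVec, hAinv, one_mulVec]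
  have h0 : 0 ≤ Φ11 i i + 2 * (b i ⬝ᵥ v) + v ⬝ᵥ (Φ22 *ᵥ v) := by
    have := diag_nonneg n _ hW i
    rwa [diag_eq] at this
  have hq : v ⬝ᵥ (A *ᵥ v) ≤ Φ11 i i + 2 * (b i ⬝ᵥ v) := by
    have hAv : A *ᵥ v = -(Φ22 *ᵥ v) := by rw [hAdef, neg_mulVec]
    rw [hAv, dotProduct_neg]; linarith
  have hu : u ⬝ᵥ (A *ᵥ u) ≤ c' i := by
    have e : u ⬝ᵥ (A *ᵥ u) = v ⬝ᵥ (A *ᵥ v) - 2 * (b i ⬝ᵥ v) + b i ⬝ᵥ w i := by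
      rw [hudef, mulVec_sub, dotProduct_sub, sub_dotProduct, sub_dotProduct, hAw,
        symm_dot T A hsymA (w i) v, hAw]
      rw [dotProduct_comm v (b i), dotProduct_comm (w i) (b i)]
      ring
    rw [hc'def]; simp only; rw [e]; linarith
  set z : Fin T → ℝ := A⁻¹ *ᵥ Pi.single j 1 with hzdef
  have hAz : A *ᵥ z = Pi.single j 1 := by
    show A *ᵥ (A⁻¹ *ᵥ Pi.single j 1) = Pi.single j 1
    rw [mulVec_mulVec, hAinv, one_mulVec]
  have huj : u j = z ⬝ᵥ (A *ᵥ u) := by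
    rw [symm_dot T A hsymA z u, hAz]
    simp [dotProduct, Pi.single_apply]
  have hz2 : z ⬝ᵥ (A *ᵥ z) = A⁻¹ j j := by
    rw [hAz, hzdef]
    simp [dotProduct, mulVec, Pi.single_apply]
  have hzn : 0 ≤ A⁻¹ j j := diag_nonneg T _ hinv.posSemidef j
  have hcs := cs T A h22.posSemidef z u
  rw [hz2] at hcs
  have hsq : (u j)^2 ≤ A⁻¹ j j * c' i := by
    rw [huj]
    calc (z ⬝ᵥ (A *ᵥ u))^2 ≤ A⁻¹ j j * (u ⬝ᵥ (A *ᵥ u)) := hcs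
      _ ≤ A⁻¹ j j * c' i := mul_le_mul_of_nonneg_left hu hzn
  have habs : |u j| ≤ Real.sqrt (A⁻¹ j j * c' i) := Real.abs_le_sqrt hsq
  have hWij : W i j = u j + w i j := by
    rw [hudef]; simp [hvdef]
  have hterm : |W i j| ≤ |w i j| + Real.sqrt (A⁻¹ j j * c' i) := by
    rw [hWij]
    calc |u j + w i j| ≤ |u j| + |w i j| := abs_add_le _ _
      _ ≤ |w i j| + Real.sqrt (A⁻¹ j j * c' i) := by linarith
  refine hterm.trans ?_
  have hnn : ∀ i' j', 0 ≤ |w i' j'| + Real.sqrt (A⁻¹ j' j' * c' i') := fun i' j' =>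
    add_nonneg (abs_nonneg _) (Real.sqrt_nonneg _)
  calc |w i j| + Real.sqrt (A⁻¹ j j * c' i)
      ≤ ∑ j', (|w i j'| + Real.sqrt (A⁻¹ j' j' * c' i)) :=
        Finset.single_le_sum (fun j' _ => hnn i j') (Finset.mem_univ j)
    _ ≤ ∑ i', ∑ j', (|w i' j'| + Real.sqrt (A⁻¹ j' j' * c' i')) :=
        Finset.single_le_sum (fun i' _ => Finset.sum_nonneg fun j' _ => hnn i' j')
          (Finset.mem_univ i)
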